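/- Let k be a nonzero rational number. The cohomology of (Λ_B, d₀) satisfies: dim_ℚ H⁰(Λ_B,d₀) = 1, H¹(Λ_B,d₀) = 0, dim_ℚ H²(Λ_B,d₀) = 1 (spanned by the class of D), dim_ℚ H³(Λ_B,d₀) = 3 (spanned by the classes of f, g and v), and H⁴(Λ_B,d₀) = 0. -/

import Mathlib

/-!
Statement 4: dimensions of the low-degree cohomology of the minimal model `(Λ_B, d₀)` of
`Emb_ω(c, μ)`: `dim H⁰ = 1`, `H¹ = 0`, `dim H² = 1` (spanned by the class of `D`),
`dim H³ = 3` (spanned by the classes of `f`, `g`, `v`), and `H⁴ = 0`.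
-/

/-- The monomial `∏ᵢ ev i ^ p i · ∏ᵢ od i ^ ε i` (odd generators taken in canonical order). -/
def gcMon {A : Type*} [Ring A] {nE nO : ℕ} (ev : Fin nE → A) (od : Fin nO → A) :
    ((Fin nE → ℕ) × (Fin nO → Bool)) → A :=
  fun m => (List.ofFn fun i => ev i ^ m.1 i).prod *
    (List.ofFn fun i => if m.2 i then od i else 1).prod

/-- The degree of a monomial, given the degrees of the generators. -/
def gcDeg {nE nO : ℕ} (dE : Fin nE → ℕ) (dO : Fin nO → ℕ) :
    ((Fin nE → ℕ) × (Fin nO → Bool)) → ℕ :=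
  fun m => (∑ i, dE i * m.1 i) + ∑ i, (if m.2 i then dO i else 0)

/-- The degree-`m` homogeneous component: the span of the monomials of degree `m`. -/
def gcGrade {A : Type*} [Ring A] [Algebra ℚ A] {nE nO : ℕ}
    (ev : Fin nE → A) (od : Fin nO → A) (dE : Fin nE → ℕ) (dO : Fin nO → ℕ) (m : ℕ) :
    Submodule ℚ A :=
  Submodule.span ℚ (gcMon ev od '' {x | gcDeg dE dO x = m})

/-- `A` is the free graded-commutative ℚ-algebra on even generators `ev` (central) and
odd generators `od` (pairwise anticommuting, squaring to zero): the monomials form a basis. -/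
structure IsFreeGCA {A : Type*} [Ring A] [Algebra ℚ A] {nE nO : ℕ}
    (ev : Fin nE → A) (od : Fin nO → A) : Prop where
  li : LinearIndependent ℚ (gcMon ev od)
  spanning : Submodule.span ℚ (Set.range (gcMon ev od)) = ⊤
  central : ∀ i x, Commute (ev i) x
  anticomm : ∀ i j, od i * od j = -(od j * od i)

/-- The grading of `Λ_B`: `D` has degree 2, `e, f, g, v` degree 3 and `h` degree 4. -/
def gradeLB {A : Type*} [Ring A] [Algebra ℚ A] (D e f g v h : A) : ℕ → Submodule ℚ A :=
  gcGrade ![D, h] ![e, f, g, v] ![2, 4] ![3, 3, 3, 3]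

/-- Degree-`m` cohomology of `(Λ_B, d₀)`: cocycles of degree `m` modulo coboundaries. -/
abbrev HcohLB {A : Type*} [Ring A] [Algebra ℚ A] (D e f g v h : A)
    (d : A →ₗ[ℚ] A) (m : ℕ) :=
  ↥(LinearMap.ker d ⊓ gradeLB D e f g v h m) ⧸
    (Submodule.comap (LinearMap.ker d ⊓ gradeLB D e f g v h m).subtype (LinearMap.range d))

theorem statement4 {A : Type*} [Ring A] [Algebra ℚ A]
    (D e f g v h : A) (k : ℚ) (hk : k ≠ 0) (d : A →ₗ[ℚ] A)
    (hfree : IsFreeGCA ![D, h] ![e, f, g, v])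
    (hdeg : ∀ (m : ℕ) (x : A), x ∈ gradeLB D e f g v h m → d x ∈ gradeLB D e f g v h (m + 1))
    (hleib : ∀ (m : ℕ) (x y : A), x ∈ gradeLB D e f g v h m →
      d (x * y) = d x * y + ((-1 : ℚ) ^ m) • (x * d y))
    (hdD : d D = 0) (hdf : d f = 0) (hdg : d g = 0) (hdv : d v = 0)
    (hde : d e = D * D) (hdh : d h = (-k) • (D * g)) :
    Module.finrank ℚ (HcohLB D e f g v h d 0) = 1 ∧
    Subsingleton (HcohLB D e f g v h d 1) ∧
    Module.finrank ℚ (HcohLB D e f g v h d 2) = 1 ∧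
    (LinearMap.ker d ⊓ gradeLB D e f g v h 2 ≤
      Submodule.span ℚ {D} ⊔ LinearMap.range d) ∧
    Module.finrank ℚ (HcohLB D e f g v h d 3) = 3 ∧
    (LinearMap.ker d ⊓ gradeLB D e f g v h 3 ≤
      Submodule.span ℚ {f, g, v} ⊔ LinearMap.range d) ∧
    Subsingleton (HcohLB D e f g v h d 4) := by
  classical
  -- the basis of monomials
  let b : Module.Basis ((Fin 2 → ℕ) × (Fin 4 → Bool)) ℚ A := Module.Basis.mk hfree.li hfree.spanning.ge
  have hb : ⇑b = gcMon ![D, h] ![e, f, g, v] := Module.Basis.coe_mk _ _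
  have hGr : ∀ m, gradeLB D e f g v h m =
      Submodule.span ℚ (⇑b '' {x | gcDeg ![2, 4] ![3, 3, 3, 3] x = m}) := by
    intro m; rw [hb]; rfl
  -- nonzero monomials
  have hne : ∀ i, gcMon ![D, h] ![e, f, g, v] i ≠ 0 := hfree.li.ne_zero
  have h1ne : (1 : A) ≠ 0 := by
    simpa [gcMon, List.ofFn_succ] using hne (![0, 0], ![false, false, false, false])
  have hDne : D ≠ 0 := by
    simpa [gcMon, List.ofFn_succ] using hne (![1, 0], ![false, false, false, false])
  have hDDne : D * D ≠ 0 := by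
    simpa [gcMon, List.ofFn_succ, pow_two] using hne (![2, 0], ![false, false, false, false])
  have hDgne : D * g ≠ 0 := by
    simpa [gcMon, List.ofFn_succ,
      show (Fin.succ 1 : Fin 4) = 2 from rfl] using hne (![1, 0], ![false, false, true, false])
  -- image computations
  have himg0 : gcMon ![D, h] ![e, f, g, v] '' {x | gcDeg ![2, 4] ![3, 3, 3, 3] x = 0}
      = {(1 : A)} := by
    ext x
    constructor
    · rintro ⟨⟨p, ε⟩, hm, rfl⟩
      simp only [Set.mem_setOf_eq] at hm
      rcases h0 : ε 0 <;> rcases h1 : ε 1 <;> rcases h2 : ε 2 <;> rcases h3 : ε 3 <;>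
        simp only [gcDeg, Fin.sum_univ_two, Fin.sum_univ_four, Matrix.cons_val_zero,
          Matrix.cons_val_one, Matrix.head_cons, Matrix.cons_val_two, Matrix.cons_val_three,
          Matrix.tail_cons, h0, h1, h2, h3, if_true, if_false, Bool.false_eq_true, ite_true,
          ite_false] at hm <;>
        first
        | omega
        | (obtain ⟨hp0, hp1⟩ : p 0 = 0 ∧ p 1 = 0 := by omega
           simp [gcMon, List.ofFn_succ, h0, h1, h2, h3, hp0, hp1,
             show (Fin.succ 0 : Fin 4) = 1 from rfl, show (Fin.succ 1 : Fin 4) = 2 from rfl,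
             show (Fin.succ 2 : Fin 4) = 3 from rfl, show (Fin.succ 0 : Fin 2) = 1 from rfl])
    · rintro rfl
      exact ⟨(![0, 0], ![false, false, false, false]), by decide, by
        simp [gcMon, List.ofFn_succ]⟩
  have himg1 : gcMon ![D, h] ![e, f, g, v] '' {x | gcDeg ![2, 4] ![3, 3, 3, 3] x = 1}
      = (∅ : Set A) := by
    ext x
    simp only [Set.mem_empty_iff_false, iff_false]
    rintro ⟨⟨p, ε⟩, hm, rfl⟩
    simp only [Set.mem_setOf_eq] at hm
    rcases h0 : ε 0 <;> rcases h1 : ε 1 <;> rcases h2 : ε 2 <;> rcases h3 : ε 3 <;>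
      simp only [gcDeg, Fin.sum_univ_two, Fin.sum_univ_four, Matrix.cons_val_zero,
        Matrix.cons_val_one, Matrix.head_cons, Matrix.cons_val_two, Matrix.cons_val_three,
        Matrix.tail_cons, h0, h1, h2, h3, if_true, if_false, Bool.false_eq_true, ite_true,
        ite_false] at hm <;> omega
  have himg2 : gcMon ![D, h] ![e, f, g, v] '' {x | gcDeg ![2, 4] ![3, 3, 3, 3] x = 2}
      = {D} := by
    ext x
    constructor
    · rintro ⟨⟨p, ε⟩, hm, rfl⟩
      simp only [Set.mem_setOf_eq] at hm
      rcases h0 : ε 0 <;> rcases h1 : ε 1 <;> rcases h2 : ε 2 <;> rcases h3 : ε 3 <;>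
        simp only [gcDeg, Fin.sum_univ_two, Fin.sum_univ_four, Matrix.cons_val_zero,
          Matrix.cons_val_one, Matrix.head_cons, Matrix.cons_val_two, Matrix.cons_val_three,
          Matrix.tail_cons, h0, h1, h2, h3, if_true, if_false, Bool.false_eq_true, ite_true,
          ite_false] at hm <;>
        first
        | omega
        | (obtain ⟨hp0, hp1⟩ : p 0 = 1 ∧ p 1 = 0 := by omega
           simp [gcMon, List.ofFn_succ, h0, h1, h2, h3, hp0, hp1,
             show (Fin.succ 0 : Fin 4) = 1 from rfl, show (Fin.succ 1 : Fin 4) = 2 from rfl,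
             show (Fin.succ 2 : Fin 4) = 3 from rfl, show (Fin.succ 0 : Fin 2) = 1 from rfl])
    · rintro rfl
      exact ⟨(![1, 0], ![false, false, false, false]), by decide, by
        simp [gcMon, List.ofFn_succ]⟩
  have himg3 : gcMon ![D, h] ![e, f, g, v] '' {x | gcDeg ![2, 4] ![3, 3, 3, 3] x = 3}
      = {e, f, g, v} := by
    ext x
    constructor
    · rintro ⟨⟨p, ε⟩, hm, rfl⟩
      simp only [Set.mem_setOf_eq] at hm
      rcases h0 : ε 0 <;> rcases h1 : ε 1 <;> rcases h2 : ε 2 <;> rcases h3 : ε 3 <;>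
        simp only [gcDeg, Fin.sum_univ_two, Fin.sum_univ_four, Matrix.cons_val_zero,
          Matrix.cons_val_one, Matrix.head_cons, Matrix.cons_val_two, Matrix.cons_val_three,
          Matrix.tail_cons, h0, h1, h2, h3, if_true, if_false, Bool.false_eq_true, ite_true,
          ite_false] at hm <;>
        first
        | omega
        | (obtain ⟨hp0, hp1⟩ : p 0 = 0 ∧ p 1 = 0 := by omega
           simp [gcMon, List.ofFn_succ, h0, h1, h2, h3, hp0, hp1,
             show (Fin.succ 0 : Fin 4) = 1 from rfl, show (Fin.succ 1 : Fin 4) = 2 from rfl,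
             show (Fin.succ 2 : Fin 4) = 3 from rfl, show (Fin.succ 0 : Fin 2) = 1 from rfl])
    · intro hx
      rcases hx with rfl | rfl | rfl | rfl
      · exact ⟨(![0, 0], ![true, false, false, false]), by decide, by
          simp [gcMon, List.ofFn_succ]⟩
      · exact ⟨(![0, 0], ![false, true, false, false]), by decide, by
          simp [gcMon, List.ofFn_succ]⟩
      · exact ⟨(![0, 0], ![false, false, true, false]), by decide, by
          simp [gcMon, List.ofFn_succ, show (Fin.succ 1 : Fin 4) = 2 from rfl]⟩
      · exact ⟨(![0, 0], ![false, false, false, true]), by decide, by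
          simp [gcMon, List.ofFn_succ, show (Fin.succ 2 : Fin 4) = 3 from rfl]⟩
  have himg4 : gcMon ![D, h] ![e, f, g, v] '' {x | gcDeg ![2, 4] ![3, 3, 3, 3] x = 4}
      = {D * D, h} := by
    ext x
    constructor
    · rintro ⟨⟨p, ε⟩, hm, rfl⟩
      simp only [Set.mem_setOf_eq] at hm
      rcases h0 : ε 0 <;> rcases h1 : ε 1 <;> rcases h2 : ε 2 <;> rcases h3 : ε 3 <;>
        simp only [gcDeg, Fin.sum_univ_two, Fin.sum_univ_four, Matrix.cons_val_zero,
          Matrix.cons_val_one, Matrix.head_cons, Matrix.cons_val_two, Matrix.cons_val_three,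
          Matrix.tail_cons, h0, h1, h2, h3, if_true, if_false, Bool.false_eq_true, ite_true,
          ite_false] at hm <;>
        first
        | omega
        | (obtain hp : p 0 = 2 ∧ p 1 = 0 ∨ p 0 = 0 ∧ p 1 = 1 := by omega
           rcases hp with ⟨hp0, hp1⟩ | ⟨hp0, hp1⟩ <;>
             simp [gcMon, List.ofFn_succ, h0, h1, h2, h3, hp0, hp1, pow_two,
               show (Fin.succ 0 : Fin 4) = 1 from rfl, show (Fin.succ 1 : Fin 4) = 2 from rfl,
               show (Fin.succ 2 : Fin 4) = 3 from rfl, show (Fin.succ 0 : Fin 2) = 1 from rfl])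
    · intro hx
      rcases hx with rfl | rfl
      · exact ⟨(![2, 0], ![false, false, false, false]), by decide, by
          simp [gcMon, List.ofFn_succ, pow_two]⟩
      · exact ⟨(![0, 1], ![false, false, false, false]), by decide, by
          simp [gcMon, List.ofFn_succ, show (Fin.succ 0 : Fin 2) = 1 from rfl]⟩
  -- explicit grades
  have hG0 : gradeLB D e f g v h 0 = Submodule.span ℚ {(1 : A)} := by
    show Submodule.span ℚ _ = _; rw [himg0]
  have hG1 : gradeLB D e f g v h 1 = ⊥ := by
    show Submodule.span ℚ _ = _; rw [himg1, Submodule.span_empty]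
  have hG2 : gradeLB D e f g v h 2 = Submodule.span ℚ {D} := by
    show Submodule.span ℚ _ = _; rw [himg2]
  have hG3 : gradeLB D e f g v h 3 = Submodule.span ℚ {e, f, g, v} := by
    show Submodule.span ℚ _ = _; rw [himg3]
  have hG4 : gradeLB D e f g v h 4 = Submodule.span ℚ {D * D, h} := by
    show Submodule.span ℚ _ = _; rw [himg4]
  -- every monomial lies in its grade
  have hmono : ∀ i, b i ∈ gradeLB D e f g v h (gcDeg ![2, 4] ![3, 3, 3, 3] i) := by
    intro i
    rw [hGr]
    exact Submodule.subset_span ⟨i, rfl, rfl⟩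
  -- d maps spans of monomials of degrees ≠ M-1 into spans of monomials of degree ≠ M
  have hd_span : ∀ (S : Set ((Fin 2 → ℕ) × (Fin 4 → Bool))) (M : ℕ),
      (∀ i ∈ S, gcDeg ![2, 4] ![3, 3, 3, 3] i + 1 ≠ M) →
      ∀ x ∈ Submodule.span ℚ (⇑b '' S),
        d x ∈ Submodule.span ℚ (⇑b '' {i | gcDeg ![2, 4] ![3, 3, 3, 3] i ≠ M}) := by
    intro S M hS x hx
    induction hx using Submodule.span_induction with
    | mem y hy =>
      obtain ⟨i, hi, rfl⟩ := hy
      have hdi : d (b i) ∈ gradeLB D e f g v h (gcDeg ![2, 4] ![3, 3, 3, 3] i + 1) :=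
        hdeg _ _ (hmono i)
      rw [hGr] at hdi
      refine Submodule.span_mono ?_ hdi
      rintro z ⟨j, hj, rfl⟩
      exact ⟨j, by simp only [Set.mem_setOf_eq] at hj ⊢; rw [hj]; exact hS i hi, rfl⟩
    | zero => rw [map_zero]; exact Submodule.zero_mem _
    | add y z _ _ ihy ihz => rw [map_add]; exact Submodule.add_mem _ ihy ihz
    | smul a y _ ih => rw [map_smul]; exact Submodule.smul_mem _ a ih
  -- disjointness of complementary spans
  have hdisj : ∀ (M : ℕ) (x : A),
      x ∈ Submodule.span ℚ (⇑b '' {i | gcDeg ![2, 4] ![3, 3, 3, 3] i = M}) →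
      x ∈ Submodule.span ℚ (⇑b '' {i | gcDeg ![2, 4] ![3, 3, 3, 3] i ≠ M}) → x = 0 := by
    intro M x h1 h2
    rw [hb] at h1 h2
    have hdis := hfree.li.disjoint_span_image
      (s := {i | gcDeg ![2, 4] ![3, 3, 3, 3] i = M})
      (t := {i | gcDeg ![2, 4] ![3, 3, 3, 3] i ≠ M})
      (Set.disjoint_left.mpr fun a ha hb' => hb' ha)
    exact Submodule.disjoint_def.mp hdis x h1 h2
  -- cocycle lifting lemmas
  have key0 : ∀ x : A, d x ∈ gradeLB D e f g v h 0 → d x = 0 := by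
    intro x hx
    have hxu : x ∈ Submodule.span ℚ (⇑b '' Set.univ) := by
      rw [Set.image_univ, hb, hfree.spanning]; exact Submodule.mem_top
    exact hdisj 0 _ ((hGr 0) ▸ hx)
      (hd_span Set.univ 0 (fun i _ => Nat.succ_ne_zero _) x hxu)
  have key : ∀ (M : ℕ) (x : A), d x ∈ gradeLB D e f g v h (M + 1) →
      ∃ y ∈ gradeLB D e f g v h M, d x = d y := by
    intro M x hx
    set l := b.repr x with hl
    set y := b.repr.symm (l.filter fun i => gcDeg ![2, 4] ![3, 3, 3, 3] i = M) with hy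
    have hry : b.repr y = l.filter fun i => gcDeg ![2, 4] ![3, 3, 3, 3] i = M := by
      rw [hy, LinearEquiv.apply_symm_apply]
    have hyG : y ∈ gradeLB D e f g v h M := by
      rw [hGr, b.mem_span_image, hry]
      intro i hi
      simp only [Finsupp.support_filter, Finset.mem_coe,
        Finset.mem_filter] at hi
      exact hi.2
    have hxy : x - y ∈ Submodule.span ℚ
        (⇑b '' {i | gcDeg ![2, 4] ![3, 3, 3, 3] i ≠ M}) := by
      rw [b.mem_span_image]
      have hr : b.repr (x - y) = l.filter fun i => ¬ gcDeg ![2, 4] ![3, 3, 3, 3] i = M := by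
        rw [map_sub, hry, ← hl]
        exact sub_eq_iff_eq_add'.mpr
          (Finsupp.filter_pos_add_filter_neg l (fun i => gcDeg ![2, 4] ![3, 3, 3, 3] i = M)).symm
      rw [hr]
      intro i hi
      simp only [Finsupp.support_filter, Finset.mem_coe, Finset.mem_filter] at hi
      exact hi.2
    refine ⟨y, hyG, ?_⟩
    have h1 : d x - d y ∈ Submodule.span ℚ
        (⇑b '' {i | gcDeg ![2, 4] ![3, 3, 3, 3] i = M + 1}) :=
      Submodule.sub_mem _ ((hGr _) ▸ hx) ((hGr _) ▸ hdeg M y hyG)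
    have h3 : d x - d y ∈ Submodule.span ℚ
        (⇑b '' {i | gcDeg ![2, 4] ![3, 3, 3, 3] i ≠ M + 1}) := by
      rw [← map_sub]
      exact hd_span _ _ (fun i hi => by
        simp only [Set.mem_setOf_eq] at hi; omega) _ hxy
    exact sub_eq_zero.mp (hdisj (M + 1) _ h1 h3)
  -- quotient by trivial boundaries
  have hquot : ∀ m : ℕ, (∀ y : A, d y ∈ gradeLB D e f g v h m → d y = 0) →
      Module.finrank ℚ (HcohLB D e f g v h d m)
        = Module.finrank ℚ ↥(LinearMap.ker d ⊓ gradeLB D e f g v h m) := by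
    intro m hm
    have hbot : Submodule.comap (LinearMap.ker d ⊓ gradeLB D e f g v h m).subtype
        (LinearMap.range d) = ⊥ := by
      rw [Submodule.eq_bot_iff]
      rintro ⟨x, hx⟩ hmem
      obtain ⟨y, hy⟩ := hmem
      have hy' : d y = x := hy
      have hx0 : x = 0 := by rw [← hy']; exact hm y (hy' ▸ hx.2)
      exact Subtype.ext hx0
    exact LinearEquiv.finrank_eq (Submodule.quotEquivOfEqBot _ hbot)
  have hd1 : d (1 : A) = 0 := by
    have h1G : (1 : A) ∈ gradeLB D e f g v h 0 := by
      rw [hG0]; exact Submodule.mem_span_singleton_self 1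
    have hl := hleib 0 1 1 h1G
    simp only [one_mul, mul_one, pow_zero, one_smul] at hl
    exact left_eq_add.mp hl
  have hN0 : LinearMap.ker d ⊓ gradeLB D e f g v h 0 = Submodule.span ℚ {(1 : A)} := by
    refine le_antisymm (hG0 ▸ inf_le_right) ?_
    rw [Submodule.span_le, Set.singleton_subset_iff]
    exact ⟨LinearMap.mem_ker.mpr hd1, by rw [hG0]; exact Submodule.mem_span_singleton_self 1⟩
  have hz2 : ∀ y : A, d y ∈ gradeLB D e f g v h 2 → d y = 0 := by
    intro y hy
    obtain ⟨z, hz, hdz⟩ := key 1 y hy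
    rw [hG1, Submodule.mem_bot] at hz
    rw [hdz, hz, map_zero]
  have hN2 : LinearMap.ker d ⊓ gradeLB D e f g v h 2 = Submodule.span ℚ {D} := by
    refine le_antisymm (hG2 ▸ inf_le_right) ?_
    rw [Submodule.span_le, Set.singleton_subset_iff]
    exact ⟨LinearMap.mem_ker.mpr hdD, by rw [hG2]; exact Submodule.mem_span_singleton_self D⟩
  have hz3 : ∀ y : A, d y ∈ gradeLB D e f g v h 3 → d y = 0 := by
    intro y hy
    obtain ⟨z, hz, hdz⟩ := key 2 y hy
    rw [hG2, Submodule.mem_span_singleton] at hz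
    obtain ⟨c, rfl⟩ := hz
    rw [hdz, map_smul, hdD, smul_zero]
  have hfgv_ker : Submodule.span ℚ {f, g, v} ≤ LinearMap.ker d := by
    rw [Submodule.span_le]
    rintro x (rfl | rfl | rfl)
    · exact LinearMap.mem_ker.mpr hdf
    · exact LinearMap.mem_ker.mpr hdg
    · exact LinearMap.mem_ker.mpr hdv
  have hN3 : LinearMap.ker d ⊓ gradeLB D e f g v h 3 = Submodule.span ℚ {f, g, v} := by
    refine le_antisymm ?_ (le_inf hfgv_ker (by
      rw [hG3]; exact Submodule.span_mono (Set.subset_insert e {f, g, v})))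
    intro x hx
    obtain ⟨hxk, hxg⟩ := Submodule.mem_inf.mp hx
    rw [hG3, Submodule.mem_span_insert] at hxg
    obtain ⟨a, z, hz, rfl⟩ := hxg
    have hdz : d z = 0 := hfgv_ker hz
    have hx0 : a • d e + d z = 0 := by
      rw [← map_smul, ← map_add]; exact hxk
    rw [hdz, add_zero, hde] at hx0
    have ha : a = 0 := by
      rcases smul_eq_zero.mp hx0 with ha | hDD
      · exact ha
      · exact absurd hDD hDDne
    rw [ha, zero_smul, zero_add]
    exact hz
  have hli3 : LinearIndependent ℚ ![f, g, v] := by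
    have hinj : Function.Injective
        (![(![0, 0], ![false, true, false, false]), (![0, 0], ![false, false, true, false]),
          (![0, 0], ![false, false, false, true])] :
          Fin 3 → (Fin 2 → ℕ) × (Fin 4 → Bool)) := by decide
    have hcomp := hfree.li.comp _ hinj
    have heq : gcMon ![D, h] ![e, f, g, v] ∘
        (![(![0, 0], ![false, true, false, false]), (![0, 0], ![false, false, true, false]),
          (![0, 0], ![false, false, false, true])] :
          Fin 3 → (Fin 2 → ℕ) × (Fin 4 → Bool)) = ![f, g, v] := by
      funext j
      fin_cases j <;>
        simp [gcMon, List.ofFn_succ, show (Fin.succ 1 : Fin 4) = 2 from rfl,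
          show (Fin.succ 2 : Fin 4) = 3 from rfl]
    rwa [heq] at hcomp
  have hrange3 : ({f, g, v} : Set A) = Set.range ![f, g, v] := by
    ext x
    simp only [Set.mem_insert_iff, Set.mem_singleton_iff, Set.mem_range]
    constructor
    · rintro (rfl | rfl | rfl)
      exacts [⟨0, rfl⟩, ⟨1, rfl⟩, ⟨2, rfl⟩]
    · rintro ⟨j, rfl⟩
      fin_cases j <;> simp
  refine ⟨?_, ?_, ?_, ?_, ?_, ?_, ?_⟩
  · rw [hquot 0 key0, hN0, finrank_span_singleton h1ne]
  · rw [Submodule.Quotient.subsingleton_iff, Submodule.eq_top_iff']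
    rintro ⟨x, hx⟩
    obtain ⟨hxk, hxg⟩ := Submodule.mem_inf.mp hx
    show x ∈ LinearMap.range d
    rw [hG1, Submodule.mem_bot] at hxg
    rw [hxg]
    exact ⟨0, map_zero d⟩
  · rw [hquot 2 hz2, hN2, finrank_span_singleton hDne]
  · exact hN2.le.trans le_sup_left
  · rw [hquot 3 hz3, hN3, hrange3, finrank_span_eq_card hli3, Fintype.card_fin]
  · exact hN3.le.trans le_sup_left
  · rw [Submodule.Quotient.subsingleton_iff, Submodule.eq_top_iff']
    rintro ⟨x, hx⟩
    obtain ⟨hxk, hxg⟩ := Submodule.mem_inf.mp hx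
    show x ∈ LinearMap.range d
    rw [hG4, Submodule.mem_span_insert] at hxg
    obtain ⟨a, z, hz, rfl⟩ := hxg
    rw [Submodule.mem_span_singleton] at hz
    obtain ⟨c, rfl⟩ := hz
    have hdDD : d (D * D) = 0 := by
      have hDG : D ∈ gradeLB D e f g v h 2 := by
        rw [hG2]; exact Submodule.mem_span_singleton_self D
      have hl := hleib 2 D D hDG
      rw [hdD] at hl
      simpa using hl
    have hx0 : (c * -k) • (D * g) = 0 := by
      have hzz : d (a • (D * D) + c • h) = 0 := hxk
      rwa [map_add, map_smul, map_smul, hdDD, smul_zero, zero_add, hdh, smul_smul] at hzz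
    have hc : c = 0 := by
      rcases smul_eq_zero.mp hx0 with hck | hDg
      · rcases mul_eq_zero.mp hck with hc | hk'
        · exact hc
        · exact absurd (neg_eq_zero.mp hk') hk
      · exact absurd hDg hDgne
    rw [hc, zero_smul, add_zero]
    exact ⟨a • e, by rw [map_smul, hde]⟩
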